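/- Let N ∈ ℕ, let K be a real symmetric positive semidefinite N×N matrix, let σ > 0, let g* ∈ ℝ^N, and let w = (w₁,…,w_N) be a random vector whose components are independent Gaussian random variables with mean 0 and variance σ². Set S = K + σ²I_N (which is invertible) and ĝ = K S^{−1}(g* + w). Then E[(ĝ − g*)ᵀ(ĝ − g*)] = σ⁴ (g*)ᵀ S^{−2} g* + N σ² + σ⁶ Tr(S^{−2}) − 2σ⁴ Tr(S^{−1}). -/

import Mathlib

open MeasureTheory ProbabilityTheory Matrix

open Real
open scoped NNReal ENNReal

section GaussHelpers

lemma odd_integral_zero {f : ℝ → ℝ} (hodd : ∀ x, f (-x) = - f x) :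
    ∫ x : ℝ, f x = 0 := by
  have h := (Measure.measurePreserving_neg (volume : Measure ℝ)).integral_comp
    (Homeomorph.neg ℝ).measurableEmbedding f
  have h2 : ∫ x : ℝ, f (-x) = ∫ x : ℝ, f x := h
  simp only [hodd, integral_neg] at h2
  linarith

lemma integral_sq_exp {b : ℝ} (hb : 0 < b) :
    ∫ x : ℝ, x ^ 2 * Real.exp (-b * x ^ 2) = Real.sqrt π / (2 * b * Real.sqrt b) := by
  have hint : Integrable (fun x : ℝ => x ^ 2 * Real.exp (-b * x ^ 2)) := by
    have := integrable_rpow_mul_exp_neg_mul_sq hb (s := 2) (by norm_num)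
    convert this using 2 with x
    rw [show (2:ℝ) = ((2:ℕ):ℝ) by norm_num, Real.rpow_natCast]
  set f : ℝ → ℝ := fun x => x ^ 2 * Real.exp (-b * x ^ 2) with hf
  have heven : ∀ x, f (-x) = f x := by intro x; simp [hf]
  have hsplit : ∫ x : ℝ, f x = 2 * ∫ x in Set.Ioi (0:ℝ), f x := by
    have hneg : ∫ x in Set.Iic (0:ℝ), f x = ∫ x in Set.Ioi (0:ℝ), f x := by
      have h := integral_comp_neg_Iic (0:ℝ) f
      simpa only [heven, neg_zero] using h
    rw [← setIntegral_univ, ← Set.Iic_union_Ioi (a := (0:ℝ)),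
      setIntegral_union (Set.Iic_disjoint_Ioi le_rfl) measurableSet_Ioi
        hint.integrableOn hint.integrableOn, hneg]
    ring
  have hIoi : ∫ x in Set.Ioi (0:ℝ), f x
      = b ^ (-(2+1) / 2 : ℝ) * (1 / 2) * Real.Gamma ((2 + 1) / 2) := by
    rw [← integral_rpow_mul_exp_neg_mul_rpow two_pos (by norm_num : (-1:ℝ) < 2) hb]
    refine setIntegral_congr_fun measurableSet_Ioi fun x _ => ?_
    rw [hf]
    rw [show (2:ℝ) = ((2:ℕ):ℝ) by norm_num, Real.rpow_natCast]
  have hGamma : Real.Gamma ((2 + 1) / 2) = Real.sqrt π / 2 := by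
    rw [show ((2:ℝ)+1)/2 = 1/2 + 1 by norm_num, Real.Gamma_add_one (by norm_num),
      Real.Gamma_one_half_eq]
    ring
  have hbpow : b ^ (-(2+1) / 2 : ℝ) = (b * Real.sqrt b)⁻¹ := by
    rw [show (-(2+1) / 2 : ℝ) = -(1 + 1/2) by norm_num, Real.rpow_neg hb.le,
      Real.rpow_add hb, Real.rpow_one, ← Real.sqrt_eq_rpow]
  have hsb : 0 < Real.sqrt b := Real.sqrt_pos.mpr hb
  rw [hsplit, hIoi, hGamma, hbpow]
  field_simp

lemma gauss_integral_eq {v : ℝ≥0} (hv : v ≠ 0) (g : ℝ → ℝ) :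
    ∫ x, g x ∂(gaussianReal 0 v) = ∫ x, gaussianPDFReal 0 v x * g x := by
  rw [gaussianReal_of_var_ne_zero _ hv, gaussianPDF_def]
  have : (fun x => ENNReal.ofReal (gaussianPDFReal 0 v x))
      = fun x => ((fun y => (gaussianPDFReal 0 v y).toNNReal) x : ℝ≥0∞) := rfl
  rw [this, integral_withDensity_eq_integral_smul
    (measurable_gaussianPDFReal 0 v).real_toNNReal g]
  congr 1
  ext x
  rw [NNReal.smul_def, Real.coe_toNNReal _ (gaussianPDFReal_nonneg 0 v x), smul_eq_mul]

lemma gauss_integrable_iff {v : ℝ≥0} (hv : v ≠ 0) {g : ℝ → ℝ} (_ : Measurable g) :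
    Integrable g (gaussianReal 0 v) ↔
      Integrable (fun x => g x * gaussianPDFReal 0 v x) volume := by
  rw [gaussianReal_of_var_ne_zero _ hv, gaussianPDF_def]
  rw [integrable_withDensity_iff (measurable_gaussianPDFReal 0 v).ennreal_ofReal
    (Filter.Eventually.of_forall fun x => ENNReal.ofReal_lt_top)]
  constructor <;> intro h <;> refine h.congr (Filter.Eventually.of_forall fun x => ?_) <;>
    simp only [ENNReal.toReal_ofReal (gaussianPDFReal_nonneg 0 v x)]

lemma gauss_pdf_eq {v : ℝ≥0} (x : ℝ) :
    gaussianPDFReal 0 v x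
      = (Real.sqrt (2 * π * v))⁻¹ * Real.exp (-(2*(v:ℝ))⁻¹ * x ^ 2) := by
  rw [gaussianPDFReal]
  congr 1
  rw [sub_zero, div_eq_mul_inv]
  ring

lemma gauss_int_id {v : ℝ≥0} (hv : v ≠ 0) :
    Integrable (fun x : ℝ => x) (gaussianReal 0 v) := by
  have hvpos : 0 < (v:ℝ) := NNReal.coe_pos.mpr (pos_iff_ne_zero.mpr hv)
  have hb : 0 < (2*(v:ℝ))⁻¹ := by positivity
  rw [gauss_integrable_iff hv measurable_id']
  have h := (integrable_mul_exp_neg_mul_sq hb).const_mul (Real.sqrt (2*π*v))⁻¹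
  refine h.congr (Filter.Eventually.of_forall fun x => ?_)
  simp only [gauss_pdf_eq]; ring

lemma gauss_int_sq {v : ℝ≥0} (hv : v ≠ 0) :
    Integrable (fun x : ℝ => x ^ 2) (gaussianReal 0 v) := by
  have hvpos : 0 < (v:ℝ) := NNReal.coe_pos.mpr (pos_iff_ne_zero.mpr hv)
  have hb : 0 < (2*(v:ℝ))⁻¹ := by positivity
  rw [gauss_integrable_iff hv (measurable_id'.pow_const 2)]
  have h0 : Integrable (fun x : ℝ => x ^ 2 * Real.exp (-(2*(v:ℝ))⁻¹ * x ^ 2)) := by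
    have := integrable_rpow_mul_exp_neg_mul_sq hb (s := 2) (by norm_num)
    convert this using 2 with x
    rw [show (2:ℝ) = ((2:ℕ):ℝ) by norm_num, Real.rpow_natCast]
  have h := h0.const_mul (Real.sqrt (2*π*v))⁻¹
  refine h.congr (Filter.Eventually.of_forall fun x => ?_)
  simp only [gauss_pdf_eq]; ring

lemma gauss_mean {v : ℝ≥0} (hv : v ≠ 0) :
    ∫ x, x ∂(gaussianReal 0 v) = 0 := by
  rw [gauss_integral_eq hv]
  refine odd_integral_zero fun x => ?_
  simp only [gauss_pdf_eq, neg_sq]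
  ring

lemma gauss_moment2 {v : ℝ≥0} (hv : v ≠ 0) :
    ∫ x, x ^ 2 ∂(gaussianReal 0 v) = v := by
  have hvpos : 0 < (v:ℝ) := NNReal.coe_pos.mpr (pos_iff_ne_zero.mpr hv)
  have hb : 0 < (2*(v:ℝ))⁻¹ := by positivity
  rw [gauss_integral_eq hv]
  have heq : (fun x => gaussianPDFReal 0 v x * x ^ 2)
      = fun x => (Real.sqrt (2*π*(v:ℝ)))⁻¹ * (x ^ 2 * Real.exp (-(2*(v:ℝ))⁻¹ * x ^ 2)) := by
    funext x; rw [gauss_pdf_eq]; ring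
  rw [heq, integral_const_mul, integral_sq_exp hb]
  have h2v : (0:ℝ) < 2 * v := by positivity
  have hsqrt2piv : Real.sqrt (2*π*(v:ℝ)) = Real.sqrt (2*(v:ℝ)) * Real.sqrt π := by
    rw [show 2*π*(v:ℝ) = (2*(v:ℝ))*π by ring, Real.sqrt_mul h2v.le]
  have hsb : Real.sqrt (2*(v:ℝ))⁻¹ = (Real.sqrt (2*(v:ℝ)))⁻¹ := Real.sqrt_inv _
  set s := Real.sqrt (2*(v:ℝ)) with hsdef
  have hs : 0 < s := Real.sqrt_pos.mpr h2v
  have hs2 : s ^ 2 = 2*(v:ℝ) := Real.sq_sqrt h2v.le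
  have hp : 0 < Real.sqrt π := Real.sqrt_pos.mpr Real.pi_pos
  rw [hsqrt2piv, hsb, ← hs2, show ((v:ℝ)) = s ^ 2 / 2 by linarith]
  field_simp

end GaussHelpers

/-- The regularization matrix `S = K + σ² I`. -/
noncomputable def Sreg (N : ℕ) (K : Matrix (Fin N) (Fin N) ℝ) (σ : ℝ) :
    Matrix (Fin N) (Fin N) ℝ :=
  K + σ ^ 2 • (1 : Matrix (Fin N) (Fin N) ℝ)

/-- The regularized estimate `ĝ = K S⁻¹ (g* + w)` evaluated on the noise vector `v`. -/
noncomputable def ghat (N : ℕ) (K : Matrix (Fin N) (Fin N) ℝ) (σ : ℝ)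
    (gs v : Fin N → ℝ) : Fin N → ℝ :=
  (K * (Sreg N K σ)⁻¹) *ᵥ (gs + v)

/-- Let `K` be a real symmetric positive semidefinite `N×N` matrix, `σ > 0`,
`g* ∈ ℝ^N`, and `w` a vector of independent Gaussian random variables with mean 0 and
variance `σ²`. With `S = K + σ²I` (invertible) and `ĝ = K S⁻¹ (g* + w)`,
`E[(ĝ-g*)ᵀ(ĝ-g*)] = σ⁴ g*ᵀ S⁻² g* + Nσ² + σ⁶ Tr(S⁻²) - 2σ⁴ Tr(S⁻¹)`. -/
theorem stmt_19 {Ω : Type*} [MeasurableSpace Ω] (P : Measure Ω) [IsProbabilityMeasure P]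
    (N : ℕ) (K : Matrix (Fin N) (Fin N) ℝ) (hK : K.PosSemidef)
    (σ : ℝ) (hσ : 0 < σ) (gs : Fin N → ℝ)
    (w : Fin N → Ω → ℝ) (hmeas : ∀ i, Measurable (w i))
    (hgauss : ∀ i, P.map (w i) = gaussianReal 0 ⟨σ ^ 2, sq_nonneg σ⟩)
    (hindep : iIndepFun w P) :
    IsUnit (Sreg N K σ).det ∧
    (∫ ω, (ghat N K σ gs (fun i => w i ω) - gs) ⬝ᵥ
          (ghat N K σ gs (fun i => w i ω) - gs) ∂P)
      = σ ^ 4 * (gs ⬝ᵥ ((Sreg N K σ)⁻¹ * (Sreg N K σ)⁻¹) *ᵥ gs)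
        + N * σ ^ 2
        + σ ^ 6 * ((Sreg N K σ)⁻¹ * (Sreg N K σ)⁻¹).trace
        - 2 * σ ^ 4 * ((Sreg N K σ)⁻¹).trace := by
  classical
  set v : ℝ≥0 := ⟨σ ^ 2, sq_nonneg σ⟩ with hvdef
  have hvcoe : (v : ℝ) = σ ^ 2 := rfl
  have hv : v ≠ 0 := by
    intro h
    have h2 : (v : ℝ) = 0 := by rw [h]; simp
    rw [hvcoe] at h2
    exact (pow_pos hσ 2).ne' h2
  -- probabilistic facts
  have hWint : ∀ i, Integrable (w i) P := by
    intro i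
    have h1 : Integrable (fun x : ℝ => x) (P.map (w i)) := by
      rw [hgauss i]; exact gauss_int_id hv
    rwa [integrable_map_measure measurable_id'.aestronglyMeasurable
      (hmeas i).aemeasurable] at h1
  have hW1 : ∀ i, ∫ ω, w i ω ∂P = 0 := by
    intro i
    have h1 : ∫ x, x ∂(P.map (w i)) = ∫ ω, w i ω ∂P :=
      integral_map (hmeas i).aemeasurable measurable_id'.aestronglyMeasurable
    rw [← h1, hgauss i]
    exact gauss_mean hv
  have hWsqint : ∀ i, Integrable (fun ω => w i ω ^ 2) P := by
    intro i
    have h1 : Integrable (fun x : ℝ => x ^ 2) (P.map (w i)) := by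
      rw [hgauss i]; exact gauss_int_sq hv
    rwa [integrable_map_measure (measurable_id'.pow_const 2).aestronglyMeasurable
      (hmeas i).aemeasurable] at h1
  have hWsq : ∀ i, ∫ ω, w i ω ^ 2 ∂P = σ ^ 2 := by
    intro i
    have h1 : ∫ x, x ^ 2 ∂(P.map (w i)) = ∫ ω, w i ω ^ 2 ∂P :=
      integral_map (hmeas i).aemeasurable (measurable_id'.pow_const 2).aestronglyMeasurable
    rw [← h1, hgauss i, gauss_moment2 hv]
    exact hvcoe
  have hWWint : ∀ i j, Integrable (fun ω => w i ω * w j ω) P := by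
    intro i j
    rcases eq_or_ne i j with rfl | hij
    · simpa [pow_two] using hWsqint i
    · exact (hindep.indepFun hij).integrable_mul (hWint i) (hWint j)
  have hWW : ∀ i j, ∫ ω, w i ω * w j ω ∂P = if i = j then σ ^ 2 else 0 := by
    intro i j
    rcases eq_or_ne i j with rfl | hij
    · simpa [pow_two] using hWsq i
    · rw [if_neg hij]
      have h := (hindep.indepFun hij).integral_mul_eq_mul_integral (hWint i).aestronglyMeasurable (hWint j).aestronglyMeasurable
      simpa [Pi.mul_apply, hW1 i, hW1 j] using h
  -- matrix facts
  set S := Sreg N K σ with hSdef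
  have h1pd : ((σ ^ 2) • (1 : Matrix (Fin N) (Fin N) ℝ)).PosDef := by
    rw [Matrix.smul_one_eq_diagonal]
    exact Matrix.posDef_diagonal_iff.mpr fun i => pow_pos hσ 2
  have hSpd : S.PosDef := Matrix.PosDef.posSemidef_add hK h1pd
  have hdet : IsUnit S.det := isUnit_iff_ne_zero.mpr hSpd.det_pos.ne'
  refine ⟨hdet, ?_⟩
  set T := S⁻¹ with hTdef
  have hSsymm : Sᵀ = S := (Matrix.conjTranspose_eq_transpose_of_trivial S) ▸ hSpd.isHermitian.eq
  have hTsymm : Tᵀ = T := by rw [hTdef, Matrix.transpose_nonsing_inv, hSsymm]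
  have hTij : ∀ i j, T j i = T i j := by
    intro i j
    calc T j i = Tᵀ i j := (Matrix.transpose_apply T i j).symm
    _ = T i j := by rw [hTsymm]
  have hST : S * T = 1 := Matrix.mul_nonsing_inv S hdet
  have hKT : K * T = 1 - σ ^ 2 • T := by
    have hK' : K = S - σ ^ 2 • 1 := by rw [hSdef, Sreg]; abel
    rw [hK', Matrix.sub_mul, hST, Matrix.smul_mul, Matrix.one_mul]
  set A := (1 : Matrix (Fin N) (Fin N) ℝ) - σ ^ 2 • T with hAdef
  set c := -(σ ^ 2 • (T *ᵥ gs)) with hcdef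
  have hdiff : ∀ ω : Ω, ghat N K σ gs (fun i => w i ω) - gs
      = c + A *ᵥ (fun i => w i ω) := by
    intro ω
    show (K * (Sreg N K σ)⁻¹) *ᵥ (gs + fun i => w i ω) - gs = _
    rw [← hSdef, ← hTdef, hKT, Matrix.mulVec_add]
    have hAgs : A *ᵥ gs = gs + c := by
      rw [hAdef, Matrix.sub_mulVec, Matrix.one_mulVec, Matrix.smul_mulVec, hcdef]
      abel
    rw [hAgs]
    abel
  have hint_eq : ∀ ω : Ω,
      (ghat N K σ gs (fun i => w i ω) - gs) ⬝ᵥ (ghat N K σ gs (fun i => w i ω) - gs)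
      = ∑ i, (c i ^ 2 + (∑ j, (2 * c i * A i j) * w j ω)
          + ∑ j, ∑ k, (A i j * A i k) * (w j ω * w k ω)) := by
    intro ω
    rw [hdiff ω, dotProduct]
    refine Finset.sum_congr rfl fun i _ => ?_
    have hAi : (A *ᵥ fun j => w j ω) i = ∑ j, A i j * w j ω := rfl
    simp only [Pi.add_apply, hAi]
    have h1 : (c i + ∑ j, A i j * w j ω) * (c i + ∑ j, A i j * w j ω)
        = c i ^ 2 + 2 * c i * (∑ j, A i j * w j ω)
          + (∑ j, A i j * w j ω) * (∑ k, A i k * w k ω) := by ring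
    rw [h1]
    congr 1
    · congr 1
      rw [Finset.mul_sum]
      exact Finset.sum_congr rfl fun j _ => by ring
    · rw [Finset.sum_mul_sum]
      exact Finset.sum_congr rfl fun j _ => Finset.sum_congr rfl fun k _ => by ring
  have hint_i : ∀ i : Fin N, Integrable (fun ω => c i ^ 2 + (∑ j, (2 * c i * A i j) * w j ω)
      + ∑ j, ∑ k, (A i j * A i k) * (w j ω * w k ω)) P := by
    intro i
    refine Integrable.add (Integrable.add (integrable_const _) ?_) ?_
    · exact integrable_finset_sum _ fun j _ => (hWint j).const_mul _
    · exact integrable_finset_sum _ fun j _ =>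
        integrable_finset_sum _ fun k _ => (hWWint j k).const_mul _
  have hval : (∫ ω, (ghat N K σ gs (fun i => w i ω) - gs) ⬝ᵥ
        (ghat N K σ gs (fun i => w i ω) - gs) ∂P)
      = ∑ i, (c i ^ 2 + σ ^ 2 * ∑ j, A i j ^ 2) := by
    simp only [hint_eq]
    rw [integral_finset_sum _ fun i _ => hint_i i]
    refine Finset.sum_congr rfl fun i _ => ?_
    have e1 : ∫ ω, (∑ j, (2 * c i * A i j) * w j ω) ∂P = 0 := by
      rw [integral_finset_sum _ fun j _ => (hWint j).const_mul _]
      simp only [integral_const_mul, hW1, mul_zero, Finset.sum_const_zero]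
    have e2 : ∫ ω, (∑ j, ∑ k, (A i j * A i k) * (w j ω * w k ω)) ∂P
        = σ ^ 2 * ∑ j, A i j ^ 2 := by
      rw [integral_finset_sum _ fun j _ =>
        integrable_finset_sum _ fun k _ => (hWWint j k).const_mul _]
      have e3 : ∀ j : Fin N, ∫ ω, (∑ k, (A i j * A i k) * (w j ω * w k ω)) ∂P
          = σ ^ 2 * A i j ^ 2 := by
        intro j
        rw [integral_finset_sum _ fun k _ => (hWWint j k).const_mul _]
        simp only [integral_const_mul, hWW, mul_ite, mul_zero]
        rw [Finset.sum_ite_eq]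
        simp only [Finset.mem_univ, if_true]
        ring
      simp only [e3]
      rw [← Finset.mul_sum]
    have I0 : Integrable (fun _ : Ω => c i ^ 2) P := integrable_const _
    have I0' : Integrable (fun ω => ∑ j, (2 * c i * A i j) * w j ω) P :=
      integrable_finset_sum _ fun j _ => (hWint j).const_mul _
    have I1 : Integrable (fun ω => c i ^ 2 + ∑ j, (2 * c i * A i j) * w j ω) P := I0.add I0'
    have I2 : Integrable (fun ω => ∑ j, ∑ k, (A i j * A i k) * (w j ω * w k ω)) P :=
      integrable_finset_sum _ fun j _ =>
        integrable_finset_sum _ fun k _ => (hWWint j k).const_mul _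
    rw [integral_add I1 I2, integral_add I0 I0', integral_const, e1, e2]
    simp [measure_univ]
  rw [hval]
  -- final algebra
  have hc2 : ∑ i, c i ^ 2 = σ ^ 4 * (gs ⬝ᵥ (T * T) *ᵥ gs) := by
    have h1 : gs ⬝ᵥ (T * T) *ᵥ gs = (T *ᵥ gs) ⬝ᵥ (T *ᵥ gs) := by
      rw [← Matrix.mulVec_mulVec, Matrix.dotProduct_mulVec, ← Matrix.mulVec_transpose, hTsymm]
    rw [h1, dotProduct, Finset.mul_sum]
    refine Finset.sum_congr rfl fun i _ => ?_
    simp only [hcdef, Pi.neg_apply, Pi.smul_apply, smul_eq_mul]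
    ring
  have hTr : T.trace = ∑ i, T i i := by simp [Matrix.trace, Matrix.diag]
  have hTT : (T * T).trace = ∑ i, ∑ j, T i j ^ 2 := by
    rw [Matrix.trace]
    simp only [Matrix.diag, Matrix.mul_apply]
    refine Finset.sum_congr rfl fun i _ => Finset.sum_congr rfl fun j _ => ?_
    rw [hTij i j]; ring
  have hAij : ∀ i j, A i j = (if i = j then (1:ℝ) else 0) - σ ^ 2 * T i j := by
    intro i j
    simp [hAdef, Matrix.sub_apply, Matrix.one_apply, Matrix.smul_apply, smul_eq_mul]
  have htr : ∑ i, ∑ j, A i j ^ 2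
      = (N : ℝ) - 2 * σ ^ 2 * T.trace + σ ^ 4 * (T * T).trace := by
    have step : ∀ i j : Fin N, A i j ^ 2
        = (if i = j then (1:ℝ) else 0) - 2 * (if i = j then σ ^ 2 * T i j else 0)
          + σ ^ 4 * T i j ^ 2 := by
      intro i j
      rw [hAij i j]
      split_ifs <;> ring
    simp only [step, Finset.sum_add_distrib, Finset.sum_sub_distrib, Finset.sum_ite_eq,
      Finset.mem_univ, if_true, ← Finset.mul_sum, Finset.sum_const, Finset.card_univ,
      Fintype.card_fin, nsmul_eq_mul, mul_one]
    rw [hTr, hTT]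
    ring
  rw [Finset.sum_add_distrib, hc2, ← Finset.mul_sum, htr]
  ring
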